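/- For the biased voter model on the complete graph with update probabilities q_0 > q_1 > 0, the mean time to consensus starting with ⌊αN⌋ agents of opinion 1 (α ∈ (0,1)) is Θ(log N): it is bounded below by (1/(q_0+q_1)) log(N(α ∧ (1-α))) and bounded above by (2/(q_0+q_1))·((1+r)/(1-r))·(log(N-1)+1), where r = q_1/q_0. -/

import Mathlib

set_option maxHeartbeats 1000000

/-- Discrete minimum principle for the biased voter recurrence. -/
lemma bv_minPrinciple (q₀ q₁ : ℝ) (hq0 : 0 < q₀) (hq1 : 0 < q₁) (N : ℕ) (u : ℕ → ℝ)
    (h0 : 0 ≤ u 0) (hNN : 0 ≤ u N)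
    (hsub : ∀ k, 1 ≤ k → k ≤ N - 1 → q₀ * u (k+1) + q₁ * u (k-1) ≤ (q₀+q₁) * u k) :
    ∀ m, m ≤ N → 0 ≤ u m := by
  by_contra hcon
  push_neg at hcon
  obtain ⟨m, hmN, hum⟩ := hcon
  have hm0 : m ≠ 0 := by rintro rfl; linarith
  have hmN' : m < N := by
    rcases eq_or_lt_of_le hmN with h | h
    · subst h; linarith
    · exact h
  have hex : ∃ j, j < m ∧ u (j+1) < u j := by
    by_contra h
    push_neg at h
    have mono : ∀ i, i ≤ m → 0 ≤ u i := by
      intro i hi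
      induction i with
      | zero => exact h0
      | succ n ih =>
        have h1 := h n (by omega)
        have h2 := ih (by omega)
        linarith
    linarith [mono m le_rfl]
  obtain ⟨j, hjm, hj⟩ := hex
  have step : ∀ k, 1 ≤ k → k + 1 ≤ N → u k < u (k-1) → u (k+1) < u k := by
    intro k hk1 hk2 hlt
    have h := hsub k hk1 (by omega)
    have h2 : q₁ * u k < q₁ * u (k-1) := mul_lt_mul_of_pos_left hlt hq1
    have h3 : q₀ * u (k+1) < q₀ * u k := by nlinarith
    exact lt_of_mul_lt_mul_left h3 (le_of_lt hq0)
  have chain : ∀ i, j + 1 + i ≤ N → u (j + 1 + i) < u (j + i) := by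
    intro i
    induction i with
    | zero => intro _; simpa using hj
    | succ n ih =>
      intro hle
      have hprev := ih (by omega)
      have hlt : u (j + 1 + n) < u ((j + 1 + n) - 1) := by
        have e : (j + 1 + n) - 1 = j + n := by omega
        rw [e]; exact hprev
      have := step (j + 1 + n) (by omega) (by omega) hlt
      have e1 : j + 1 + n + 1 = j + 1 + (n+1) := by omega
      have e2 : j + 1 + n = j + (n+1) := by omega
      rw [e1, e2] at this
      exact this
  have desc : ∀ i, m + i ≤ N → u (m + i) ≤ u m := by
    intro i
    induction i with
    | zero => intro _; simp
    | succ n ih =>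
      intro hle
      have h1 := ih (by omega)
      have := chain (m + n - j) (by omega)
      have e1 : j + 1 + (m + n - j) = m + (n+1) := by omega
      have e2 : j + (m + n - j) = m + n := by omega
      rw [e1, e2] at this
      linarith
  have hfin := desc (N - m) (by omega)
  have e : m + (N - m) = N := by omega
  rw [e] at hfin
  linarith

/-- Harmonic sum bound `H_n ≤ log n + 1`. -/
lemma bv_harmonic : ∀ n : ℕ, 1 ≤ n → ∑ j ∈ Finset.Icc 1 n, (1:ℝ)/j ≤ Real.log n + 1 := by
  intro n hn
  induction n with
  | zero => omega
  | succ m ih =>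
    rcases Nat.eq_or_lt_of_le hn with h | h
    · simp [← h]
    · have hm : 1 ≤ m := by omega
      have hIH := ih hm
      rw [Finset.sum_Icc_succ_top (by omega : 1 ≤ m + 1)]
      have hlog : Real.log m + 1/((m:ℝ)+1) ≤ Real.log ((m:ℝ)+1) := by
        have hx : (0:ℝ) < (m:ℝ)/((m:ℝ)+1) := by positivity
        have h2 := Real.log_le_sub_one_of_pos hx
        rw [Real.log_div (by positivity) (by positivity)] at h2
        have he : (m:ℝ)/((m:ℝ)+1) - 1 = -(1/((m:ℝ)+1)) := by field_simp; ring
        rw [he] at h2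
        linarith
      push_cast
      push_cast at hIH
      linarith

/-- Log ratio bound. -/
lemma bv_logdiff (a b y : ℝ) (ha : 0 < a) (hb : 0 < b) (hy : 0 < y)
    (h : a ≤ (1 + 1/y) * b) : Real.log a - Real.log b ≤ 1/y := by
  have h1 : Real.log a ≤ Real.log ((1+1/y) * b) := Real.log_le_log ha h
  have h2 : Real.log ((1+1/y)*b) = Real.log (1+1/y) + Real.log b :=
    Real.log_mul (by positivity) (ne_of_gt hb)
  have h3 : Real.log (1+1/y) ≤ 1/y := by
    have := Real.log_le_sub_one_of_pos (show (0:ℝ) < 1 + 1/y by positivity)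
    linarith
  linarith

/-- For the biased voter model on the complete graph with update probabilities
`q₀ > q₁ > 0` and `r = q₁/q₀`, the mean absorption (consensus) time `t`,
characterized by `t 0 = t N = 0` and the first-step recurrence
`t k = N/((q₀+q₁)k(N-k)) + (q₀/(q₀+q₁)) t(k+1) + (q₁/(q₀+q₁)) t(k-1)`,
started from `⌊αN⌋` agents of opinion 1 (`α ∈ (0,1)`), is `Θ(log N)`:
it is at least `(1/(q₀+q₁)) log(N(α ∧ (1-α)))` and at most
`(2/(q₀+q₁))((1+r)/(1-r))(log(N-1)+1)`. -/
theorem stmt_13 (q₀ q₁ : ℝ) (hq : q₀ > q₁) (hq₁ : q₁ > 0) (r : ℝ) (hr : r = q₁ / q₀)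
    (α : ℝ) (hα : α ∈ Set.Ioo (0 : ℝ) 1) (N : ℕ) (hN : 2 ≤ N)
    (hfloor : 1 ≤ ⌊α * N⌋₊ ∧ ⌊α * N⌋₊ ≤ N - 1)
    (t : ℕ → ℝ) (ht0 : t 0 = 0) (htN : t N = 0)
    (hrec : ∀ k, 1 ≤ k → k ≤ N - 1 →
      t k = N / ((q₀ + q₁) * k * (N - k))
            + (q₀ / (q₀ + q₁)) * t (k + 1) + (q₁ / (q₀ + q₁)) * t (k - 1)) :
    (1 / (q₀ + q₁)) * Real.log (N * min α (1 - α)) ≤ t ⌊α * N⌋₊ ∧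
      t ⌊α * N⌋₊ ≤ (2 / (q₀ + q₁)) * ((1 + r) / (1 - r)) * (Real.log (N - 1) + 1) := by
  subst hr
  obtain ⟨hα0, hα1⟩ := hα
  obtain ⟨hf1, hf2⟩ := hfloor
  set k₀ := ⌊α * N⌋₊ with hk₀
  have hq0 : 0 < q₀ := hq₁.trans hq
  have hs : 0 < q₀ + q₁ := by linarith
  have hr0 : 0 < q₁ / q₀ := by positivity
  have hr1 : q₁ / q₀ < 1 := (div_lt_one hq0).mpr hq
  have h1r : 0 < 1 - q₁ / q₀ := by linarith
  set R : ℝ := q₁ / q₀ with hR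
  set c : ℕ → ℝ := fun k => (N:ℝ) / (k * ((N:ℝ) - k)) with hc_def
  have hbal : ∀ k, 1 ≤ k → k ≤ N - 1 →
      (q₀ + q₁) * t k = c k + q₀ * t (k+1) + q₁ * t (k-1) := by
    intro k hk1 hk2
    have hkR : (1:ℝ) ≤ (k:ℝ) := by exact_mod_cast hk1
    have hkN : (k:ℝ) + 1 ≤ (N:ℝ) := by exact_mod_cast (by omega : k + 1 ≤ N)
    have hk0 : (k:ℝ) ≠ 0 := by linarith
    have hNk : (N:ℝ) - (k:ℝ) ≠ 0 := by intro h; linarith [h]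
    have h := hrec k hk1 hk2
    rw [h]
    simp only [hc_def]
    field_simp
  have hcpos : ∀ k, 1 ≤ k → k ≤ N - 1 → 0 < c k := by
    intro k hk1 hk2
    have hkR : (1:ℝ) ≤ (k:ℝ) := by exact_mod_cast hk1
    have hkN : (k:ℝ) + 1 ≤ (N:ℝ) := by exact_mod_cast (by omega : k + 1 ≤ N)
    have hNpos : (0:ℝ) < N := by linarith
    apply div_pos hNpos
    nlinarith
  constructor
  · -- LOWER BOUND
    set L : ℕ → ℝ := fun k => Real.log (min ((k:ℝ)+1) ((N:ℝ)+1-(k:ℝ))) with hL_def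
    have hL0 : L 0 = 0 := by
      simp only [hL_def]
      norm_num
    have hLN : L N = 0 := by
      simp only [hL_def]
      rw [min_eq_right (by norm_num)]
      norm_num
    -- interior subsolution estimates
    have hlemB : ∀ k, 1 ≤ k → k ≤ N - 1 → L k - L (k-1) ≤ c k := by
      intro k hk1 hk2
      have hkR : (1:ℝ) ≤ (k:ℝ) := by exact_mod_cast hk1
      have hkN : (k:ℝ) + 1 ≤ (N:ℝ) := by exact_mod_cast (by omega : k + 1 ≤ N)
      have hcast : ((k-1 : ℕ):ℝ) = (k:ℝ) - 1 := by
        have := Nat.cast_sub hk1 (R := ℝ); push_cast at this ⊢; linarith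
      have hLk1 : L (k-1) = Real.log (min ((k:ℝ)) ((N:ℝ)+2-(k:ℝ))) := by
        simp only [hL_def, hcast]
        ring_nf
      have ha : (0:ℝ) < min ((k:ℝ)+1) ((N:ℝ)+1-(k:ℝ)) := lt_min (by linarith) (by linarith)
      have hb : (0:ℝ) < min ((k:ℝ)) ((N:ℝ)+2-(k:ℝ)) := lt_min (by linarith) (by linarith)
      have hkpos : (0:ℝ) < (k:ℝ) := by linarith
      have key : min ((k:ℝ)+1) ((N:ℝ)+1-(k:ℝ)) ≤ (1 + 1/(k:ℝ)) * min ((k:ℝ)) ((N:ℝ)+2-(k:ℝ)) := by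
        rcases le_total ((k:ℝ)) ((N:ℝ)+2-(k:ℝ)) with h | h
        · rw [min_eq_left h]
          have : (1 + 1/(k:ℝ)) * (k:ℝ) = (k:ℝ) + 1 := by field_simp
          rw [this]
          exact min_le_left _ _
        · rw [min_eq_right h]
          have h1 : (N:ℝ)+1-(k:ℝ) ≤ (1 + 1/(k:ℝ)) * ((N:ℝ)+2-(k:ℝ)) := by
            have h2 : (0:ℝ) ≤ (N:ℝ)+2-(k:ℝ) := by linarith
            nlinarith [div_pos (show (0:ℝ) < 1 by norm_num) hkpos]
          exact le_trans (min_le_right _ _) h1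
      have hld := bv_logdiff _ _ _ ha hb hkpos key
      have hck : 1/(k:ℝ) ≤ c k := by
        simp only [hc_def]
        rw [div_le_div_iff₀ hkpos (by nlinarith)]
        nlinarith
      rw [hLk1]
      simp only [hL_def]
      linarith
    have hlemA : ∀ k, 1 ≤ k → k ≤ N - 1 → L k - L (k+1) ≤ c k := by
      intro k hk1 hk2
      have hkR : (1:ℝ) ≤ (k:ℝ) := by exact_mod_cast hk1
      have hkN : (k:ℝ) + 1 ≤ (N:ℝ) := by exact_mod_cast (by omega : k + 1 ≤ N)
      have hLk1 : L (k+1) = Real.log (min ((k:ℝ)+2) ((N:ℝ)-(k:ℝ))) := by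
        simp only [hL_def]
        push_cast
        ring_nf
      have ha : (0:ℝ) < min ((k:ℝ)+1) ((N:ℝ)+1-(k:ℝ)) := lt_min (by linarith) (by linarith)
      have hb : (0:ℝ) < min ((k:ℝ)+2) ((N:ℝ)-(k:ℝ)) := lt_min (by linarith) (by linarith)
      have hNk : (0:ℝ) < (N:ℝ)-(k:ℝ) := by linarith
      have key : min ((k:ℝ)+1) ((N:ℝ)+1-(k:ℝ)) ≤ (1 + 1/((N:ℝ)-(k:ℝ))) * min ((k:ℝ)+2) ((N:ℝ)-(k:ℝ)) := by
        rcases le_total ((k:ℝ)+2) ((N:ℝ)-(k:ℝ)) with h | h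
        · rw [min_eq_left h]
          have h1 : (k:ℝ)+1 ≤ (1 + 1/((N:ℝ)-(k:ℝ))) * ((k:ℝ)+2) := by
            nlinarith [div_pos (show (0:ℝ) < 1 by norm_num) hNk]
          exact le_trans (min_le_left _ _) h1
        · rw [min_eq_right h]
          have : (1 + 1/((N:ℝ)-(k:ℝ))) * ((N:ℝ)-(k:ℝ)) = (N:ℝ)+1-(k:ℝ) := by field_simp; ring
          rw [this]
          exact min_le_right _ _
      have hld := bv_logdiff _ _ _ ha hb hNk key
      have hck : 1/((N:ℝ)-(k:ℝ)) ≤ c k := by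
        simp only [hc_def]
        rw [div_le_div_iff₀ hNk (by nlinarith)]
        nlinarith
      rw [hLk1]
      simp only [hL_def]
      linarith
    -- subsolution property for u = t - (1/s) L
    set u : ℕ → ℝ := fun m => t m - (1/(q₀+q₁)) * L m with hu_def
    have hsub : ∀ k, 1 ≤ k → k ≤ N - 1 → q₀ * u (k+1) + q₁ * u (k-1) ≤ (q₀+q₁) * u k := by
      intro k hk1 hk2
      have hb := hbal k hk1 hk2
      have hA := hlemA k hk1 hk2
      have hB := hlemB k hk1 hk2
      have key : (q₀+q₁) * L k - q₀ * L (k+1) - q₁ * L (k-1) ≤ (q₀+q₁) * c k := by nlinarith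
      have hw : 0 ≤ 1/(q₀+q₁) := by positivity
      have keymul := mul_le_mul_of_nonneg_left key hw
      have e_ck : (1/(q₀+q₁)) * ((q₀+q₁) * c k) = c k := by field_simp
      simp only [hu_def]
      nlinarith [keymul, hb, e_ck]
    have humP := bv_minPrinciple q₀ q₁ hq0 hq₁ N u
      (by simp [hu_def, ht0, hL0]) (by simp [hu_def, htN, hLN]) hsub k₀ (by omega)
    have hLk₀ : Real.log ((N:ℝ) * min α (1 - α)) ≤ L k₀ := by
      simp only [hL_def]
      apply Real.log_le_log
      · have : 0 < min α (1-α) := lt_min hα0 (by linarith)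
        have hNpos : (0:ℝ) < N := by positivity
        positivity
      · have hfl : (k₀:ℝ) ≤ α * N := Nat.floor_le (by positivity)
        have hfl2 : α * N < (k₀:ℝ) + 1 := Nat.lt_floor_add_one _
        apply le_min
        · calc (N:ℝ) * min α (1-α) ≤ (N:ℝ) * α := by
                have : (0:ℝ) ≤ (N:ℝ) := by positivity
                exact mul_le_mul_of_nonneg_left (min_le_left _ _) this
            _ ≤ (k₀:ℝ) + 1 := by nlinarith
        · calc (N:ℝ) * min α (1-α) ≤ (N:ℝ) * (1-α) := by
                have : (0:ℝ) ≤ (N:ℝ) := by positivity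
                exact mul_le_mul_of_nonneg_left (min_le_right _ _) this
            _ ≤ (N:ℝ) + 1 - (k₀:ℝ) := by nlinarith
    have hwpos : 0 ≤ 1/(q₀+q₁) := by positivity
    have := mul_le_mul_of_nonneg_left hLk₀ hwpos
    simp only [hu_def] at humP
    linarith
  · -- UPPER BOUND
    set D : ℝ := t 1 with hD
    set S : ℕ → ℝ := fun k => D * R^k - (t (k+1) - t k) with hS_def
    have hS0 : S 0 = 0 := by simp [hS_def, hD, ht0]
    have hSrec : ∀ j, j + 1 ≤ N - 1 → S (j+1) = R * S j + c (j+1) / q₀ := by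
      intro j hj
      have hb := hbal (j+1) (by omega) hj
      simp only [Nat.add_sub_cancel] at hb
      simp only [hS_def]
      have hq0' : q₀ ≠ 0 := ne_of_gt hq0
      linear_combination (norm := (field_simp; try ring)) (1/q₀) * hb + (t (j+1) - t j) * hR
    have hSnn : ∀ k, k ≤ N - 1 → 0 ≤ S k := by
      intro k
      induction k with
      | zero => intro _; simp [hS0]
      | succ j ih =>
        intro hk
        rw [hSrec j hk]
        have h1 := ih (by omega)
        have h2 := hcpos (j+1) (by omega) hk
        have : 0 ≤ R := hr0.le
        positivity
    have htsum : ∀ m, t m = D * (∑ k ∈ Finset.range m, R^k) - ∑ k ∈ Finset.range m, S k := by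
      intro m
      have h1 : ∑ k ∈ Finset.range m, (t (k+1) - t k) = t m - t 0 := Finset.sum_range_sub t m
      have h2 : ∀ k ∈ Finset.range m, t (k+1) - t k = D * R^k - S k := by
        intro k _; simp only [hS_def]; ring
      calc t m = ∑ k ∈ Finset.range m, (t (k+1) - t k) := by rw [h1, ht0]; ring
        _ = ∑ k ∈ Finset.range m, (D * R^k - S k) := Finset.sum_congr rfl h2
        _ = D * (∑ k ∈ Finset.range m, R^k) - ∑ k ∈ Finset.range m, S k := by
            rw [Finset.sum_sub_distrib, Finset.mul_sum]
    have hTN : D * (∑ k ∈ Finset.range N, R^k) = ∑ k ∈ Finset.range N, S k := by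
      have h := htsum N; rw [htN] at h; linarith
    have hσ1 : (1:ℝ) ≤ ∑ k ∈ Finset.range N, R^k := by
      have := Finset.single_le_sum (f := fun k => R^k)
        (fun i _ => pow_nonneg hr0.le i) (Finset.mem_range.mpr (by omega : 0 < N))
      simpa using this
    have hTnn : 0 ≤ ∑ k ∈ Finset.range N, S k :=
      Finset.sum_nonneg fun k hk => hSnn k (by have := Finset.mem_range.mp hk; omega)
    have hDnn : 0 ≤ D := by nlinarith
    have hQ : ∀ m, m ≤ N - 1 →
        (∑ k ∈ Finset.range (m+1), S k) + (R/(1-R)) * S m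
          ≤ (∑ j ∈ Finset.Icc 1 m, c j) / (q₀ * (1-R)) := by
      intro m
      induction m with
      | zero => intro _; simp [hS0]
      | succ j ih =>
        intro hj
        have hIH := ih (by omega)
        rw [Finset.sum_range_succ, Finset.sum_Icc_succ_top (by omega : 1 ≤ j+1), hSrec j hj]
        have key : (R * S j + c (j+1)/q₀) + (R/(1-R)) * (R * S j + c (j+1)/q₀)
            = (R/(1-R)) * S j + c (j+1) / (q₀ * (1-R)) := by
          field_simp
          ring
        have hsplit : ((∑ i ∈ Finset.Icc 1 j, c i) + c (j+1))/(q₀*(1-R))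
            = (∑ i ∈ Finset.Icc 1 j, c i)/(q₀*(1-R)) + c (j+1)/(q₀*(1-R)) := add_div _ _ _
        rw [hsplit]
        linarith
    have hTbound : ∑ k ∈ Finset.range N, S k
        ≤ (∑ j ∈ Finset.Icc 1 (N-1), c j) / (q₀ * (1-R)) := by
      have h := hQ (N-1) le_rfl
      have e : N - 1 + 1 = N := by omega
      rw [e] at h
      have hSN : 0 ≤ (R/(1-R)) * S (N-1) :=
        mul_nonneg (by positivity) (hSnn (N-1) le_rfl)
      linarith
    -- value of the sum of c
    have hCval : ∑ j ∈ Finset.Icc 1 (N-1), c j = 2 * ∑ j ∈ Finset.Icc 1 (N-1), (1:ℝ)/j := by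
      have h1 : ∀ j ∈ Finset.Icc 1 (N-1), c j = 1/(j:ℝ) + 1/((N:ℝ)-(j:ℝ)) := by
        intro j hj
        rw [Finset.mem_Icc] at hj
        have hjR : (1:ℝ) ≤ (j:ℝ) := by exact_mod_cast hj.1
        have hjN : (j:ℝ) + 1 ≤ (N:ℝ) := by exact_mod_cast (by omega : j + 1 ≤ N)
        simp only [hc_def]
        have h0j : (j:ℝ) ≠ 0 := by linarith
        have h0Nj : (N:ℝ) - (j:ℝ) ≠ 0 := by intro h; linarith [h]
        field_simp
        try ring
      rw [Finset.sum_congr rfl h1, Finset.sum_add_distrib]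
      have h2 : ∑ j ∈ Finset.Icc 1 (N-1), 1/((N:ℝ)-(j:ℝ)) = ∑ j ∈ Finset.Icc 1 (N-1), (1:ℝ)/j := by
        apply Finset.sum_nbij' (i := fun j => N - j) (j := fun j => N - j)
        · intro a ha; rw [Finset.mem_Icc] at ha ⊢; omega
        · intro a ha; rw [Finset.mem_Icc] at ha ⊢; omega
        · intro a ha; rw [Finset.mem_Icc] at ha; omega
        · intro a ha; rw [Finset.mem_Icc] at ha; omega
        · intro a ha
          rw [Finset.mem_Icc] at ha
          have : ((N - a : ℕ):ℝ) = (N:ℝ) - (a:ℝ) := by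
            have : a ≤ N := by omega
            push_cast [Nat.cast_sub this]
            ring
          rw [this]
      rw [h2]
      ring
    have hH := bv_harmonic (N-1) (by omega)
    have hcastN : ((N-1 : ℕ):ℝ) = (N:ℝ) - 1 := by
      have : 1 ≤ N := by omega
      push_cast [Nat.cast_sub this]
      ring
    rw [hcastN] at hH
    -- assemble
    have hσmono : (∑ k ∈ Finset.range k₀, R^k) ≤ ∑ k ∈ Finset.range N, R^k := by
      apply Finset.sum_le_sum_of_subset_of_nonneg
      · exact Finset.range_subset_range.mpr (by omega)
      · intro i _ _; exact pow_nonneg hr0.le i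
    have hSsum_nn : 0 ≤ ∑ k ∈ Finset.range k₀, S k :=
      Finset.sum_nonneg fun k hk => hSnn k (by have := Finset.mem_range.mp hk; omega)
    have ht_le : t k₀ ≤ ∑ k ∈ Finset.range N, S k := by
      have h := htsum k₀
      have h2 : D * (∑ k ∈ Finset.range k₀, R^k) ≤ D * ∑ k ∈ Finset.range N, R^k :=
        mul_le_mul_of_nonneg_left hσmono hDnn
      rw [hTN] at h2
      linarith
    have hfinal : t k₀ ≤ 2 * (Real.log ((N:ℝ)-1) + 1) / (q₀ * (1-R)) := by
      have hmono : (∑ j ∈ Finset.Icc 1 (N-1), c j) / (q₀ * (1-R))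
          ≤ 2 * (Real.log ((N:ℝ)-1) + 1) / (q₀ * (1-R)) := by
        rw [div_le_div_iff_of_pos_right (by positivity)]
        rw [hCval]; linarith
      linarith
    have hconst : 2 * (Real.log ((N:ℝ)-1) + 1) / (q₀ * (1-R))
        = (2 / (q₀ + q₁)) * ((1 + R) / (1 - R)) * (Real.log ((N:ℝ) - 1) + 1) := by
      rw [hR]
      have h1 : q₀ - q₁ ≠ 0 := by linarith
      field_simp
      try ring
    rw [← hconst]
    exact hfinal
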